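/- (Rouché step in Proposition 2.6) Let L ⊆ ℂ be compact, equal to the closure of its interior, K ⊆ L° compact with δ := (1/2)dist(K, ∂L) > 0. If h is holomorphic on a neighborhood of L and ‖h(z) - z‖ < δ on L, then h is injective on K. -/

import Mathlib

open Metric Set

/-- Rouché step: if L is compact and equal to the closure of its interior, K ⊆ L° is
compact with dist(K, ∂L) = 2δ > 0, and h is holomorphic near L with |h(z) - z| < δ on L,
then h is injective on K. -/
theorem rouche_injective (K L : Set ℂ) (hK : IsCompact K) (hL : IsCompact L)
    (hLcl : L = closure (interior L)) (hKL : K ⊆ interior L)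
    (δ : ℝ) (hδ : 0 < δ)
    (hdist : ∀ z ∈ K, ∀ w ∈ frontier L, 2 * δ ≤ dist z w)
    (U : Set ℂ) (hU : IsOpen U) (hLU : L ⊆ U)
    (h : ℂ → ℂ) (hh : DifferentiableOn ℂ h U)
    (hclose : ∀ z ∈ L, ‖h z - z‖ < δ) :
    Set.InjOn h K := by
  intro z₁ hz₁ z₂ hz₂ heq
  by_contra hne
  set g : ℂ → ℂ := fun z => h z - z with hg
  have hgU : DifferentiableOn ℂ g U := hh.sub differentiableOn_id
  have hLsub : interior L ⊆ L := interior_subset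
  have hz₁L : z₁ ∈ L := hLsub (hKL hz₁)
  have hz₂L : z₂ ∈ L := hLsub (hKL hz₂)
  set d := dist z₁ z₂ with hd
  have hd0 : 0 < d := dist_pos.mpr hne
  -- d < 2δ
  have hd2 : d < 2 * δ := by
    have harg : z₁ - z₂ = (z₁ - h z₁) + (h z₂ - z₂) := by rw [heq]; ring
    calc d = ‖(z₁ - h z₁) + (h z₂ - z₂)‖ := by
          rw [hd, Complex.dist_eq, harg]
      _ ≤ ‖z₁ - h z₁‖ + ‖h z₂ - z₂‖ := norm_add_le _ _
      _ < δ + δ := by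
          refine add_lt_add ?_ (hclose z₂ hz₂L)
          rw [← norm_neg]; simpa using hclose z₁ hz₁L
      _ = 2 * δ := by ring
  set r := 2 * δ - d / 2 with hr
  have hrδ : δ < r := by simp only [hr]; linarith
  have hr0 : 0 < r := by linarith
  -- every point of the segment has a ball of radius r inside the interior of L
  have key : ∀ w ∈ segment ℝ z₁ z₂, ball w r ⊆ interior L := by
    intro w hw
    -- w is within d/2 of one of the endpoints
    have : ∃ e ∈ K, dist w e ≤ d / 2 := by
      obtain ⟨a, b, ha, hb, hab, rfl⟩ := hw
      rcases le_total b (1/2 : ℝ) with htle | htle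
      · refine ⟨z₁, hz₁, ?_⟩
        have harg : a • z₁ + b • z₂ - z₁ = b • (z₂ - z₁) := by
          have : a = 1 - b := by linarith
          rw [this]; simp [sub_smul, smul_sub]; ring
        rw [dist_eq_norm, harg, norm_smul]
        simp only [Real.norm_eq_abs, abs_of_nonneg hb]
        have hnn : ‖z₂ - z₁‖ = d := by rw [hd, dist_comm, dist_eq_norm]
        rw [hnn]
        nlinarith [hd0.le]
      · refine ⟨z₂, hz₂, ?_⟩
        have harg : a • z₁ + b • z₂ - z₂ = a • (z₁ - z₂) := by
          have : b = 1 - a := by linarith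
          rw [this]; simp [sub_smul, smul_sub]; ring
        rw [dist_eq_norm, harg, norm_smul]
        simp only [Real.norm_eq_abs, abs_of_nonneg ha]
        have hnn : ‖z₁ - z₂‖ = d := by rw [hd, dist_eq_norm]
        rw [hnn]
        nlinarith [hd0.le]
    obtain ⟨e, heK, hwe⟩ := this
    have hball_front : ∀ x ∈ ball w r, x ∉ frontier L := by
      intro x hx hxf
      have h1 : 2 * δ ≤ dist e x := hdist e heK x hxf
      have h2 : dist e x ≤ dist e w + dist w x := dist_triangle e w x
      have h3 : dist w x < r := by rwa [mem_ball, dist_comm] at hx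
      rw [dist_comm] at hwe
      simp only [hr] at h3
      linarith
    -- connectedness argument
    have hsub : ball w r ⊆ interior L ∪ (closure L)ᶜ := by
      intro x hx
      by_cases hxi : x ∈ interior L
      · exact Or.inl hxi
      · refine Or.inr fun hxc => hball_front x hx ?_
        exact ⟨hxc, hxi⟩
    have hdisj : Disjoint (interior L) (closure L)ᶜ :=
      disjoint_compl_right.mono_left (interior_subset.trans subset_closure)
    have hnon : (ball w r ∩ interior L).Nonempty := by
      refine ⟨e, ?_, hKL heK⟩
      rw [mem_ball, dist_comm] at *
      rw [dist_comm] at hwe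
      exact lt_of_le_of_lt hwe (by simp only [hr]; linarith)
    exact (convex_ball w r).isPreconnected.subset_left_of_subset_union isOpen_interior
      (isClosed_closure.isOpen_compl) hdisj hsub hnon
  -- derivative bound on the segment
  have hLopen_in : interior L ⊆ U := interior_subset.trans hLU
  have hderiv_bound : ∀ w ∈ segment ℝ z₁ z₂, ‖deriv g w‖ ≤ δ / r := by
    intro w hw
    have hballL : ball w r ⊆ interior L := key w hw
    have hcball : closedBall w r ⊆ L := by
      rw [← closure_ball w hr0.ne']
      calc closure (ball w r) ⊆ closure (interior L) := closure_mono hballL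
        _ = L := hLcl.symm
    refine Complex.norm_deriv_le_of_forall_mem_sphere_norm_le hr0 ?_ ?_
    · refine DifferentiableOn.diffContOnCl ?_
      refine hgU.mono ?_
      rw [closure_ball w hr0.ne']
      exact hcball.trans hLU
    · intro z hz
      have hzL : z ∈ L := hcball (sphere_subset_closedBall hz)
      exact (hclose z hzL).le
  -- mean value inequality
  have hhasderiv : ∀ w ∈ segment ℝ z₁ z₂, HasDerivWithinAt g (deriv g w) (segment ℝ z₁ z₂) w := by
    intro w hw
    have hwU : w ∈ U := hLopen_in (key w hw (mem_ball_self hr0))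
    have : DifferentiableAt ℂ g w := hgU.differentiableAt (hU.mem_nhds hwU)
    exact this.hasDerivAt.hasDerivWithinAt
  have hmv : ‖g z₂ - g z₁‖ ≤ (δ / r) * ‖z₂ - z₁‖ :=
    Convex.norm_image_sub_le_of_norm_hasDerivWithin_le hhasderiv hderiv_bound
      (convex_segment z₁ z₂) (left_mem_segment ℝ z₁ z₂) (right_mem_segment ℝ z₁ z₂)
  -- conclude
  have hgdiff : g z₂ - g z₁ = z₁ - z₂ := by
    simp only [hg]; rw [heq]; ring
  rw [hgdiff] at hmv
  have h1 : ‖z₁ - z₂‖ = d := by rw [hd, dist_eq_norm]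
  have h2 : ‖z₂ - z₁‖ = d := by rw [hd, dist_comm, dist_eq_norm]
  rw [h1, h2] at hmv
  have hfrac : δ / r < 1 := (div_lt_one hr0).mpr hrδ
  nlinarith
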